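/- Let X : n×d be a real matrix, y ∈ ℝⁿ, and suppose β⁽⁰⁾ minimizes ‖Xβ − y‖₂ over β ∈ ℝᵈ, with M = ‖Xβ⁽⁰⁾ − y‖₂ > 0. Let w ∈ [0,1]ⁿ and β* be such that Xᵀ(w ⋆ (Xβ* − y)) = 0, i.e., β* is a weighted OLS solution with weights w. Let B = { i ∈ [n] : |⟨Xᵢ,β*⟩ − yᵢ| > M }. Then Σ_{i ∈ B} wᵢ ≤ 1. -/

import Mathlib

/-- if `β⁽⁰⁾` minimizes `‖Xβ − y‖₂` with value `M > 0`, and `β*`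
is a weighted OLS solution for weights `w ∈ [0,1]ⁿ`, then the total weight on
samples whose residual at `β*` exceeds `M` in magnitude is at most `1`. -/
theorem weight_on_large_residuals_le_one (n d : ℕ)
    (X : Matrix (Fin n) (Fin d) ℝ) (y : Fin n → ℝ)
    (β₀ : Fin d → ℝ)
    (hβ₀ : ∀ β : Fin d → ℝ,
      Real.sqrt (∑ i, (X.mulVec β₀ i - y i) ^ 2) ≤
        Real.sqrt (∑ i, (X.mulVec β i - y i) ^ 2))
    (M : ℝ) (hM : M = Real.sqrt (∑ i, (X.mulVec β₀ i - y i) ^ 2)) (hMpos : 0 < M)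
    (w : Fin n → ℝ) (hw : ∀ i, 0 ≤ w i ∧ w i ≤ 1)
    (βs : Fin d → ℝ)
    (hβs : X.transpose.mulVec (fun i => w i * (X.mulVec βs i - y i)) = 0) :
    ∑ i ∈ Finset.univ.filter (fun i => M < |X.mulVec βs i - y i|), w i ≤ 1 := by
  set r : Fin n → ℝ := fun i => X.mulVec βs i - y i with hr
  set δ : Fin d → ℝ := fun j => β₀ j - βs j with hδ
  have hM2 : M ^ 2 = ∑ i, (X.mulVec β₀ i - y i) ^ 2 := by
    rw [hM, Real.sq_sqrt]; positivity
  have hsplit : ∀ i, X.mulVec β₀ i - y i = r i + X.mulVec δ i := by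
    intro i
    simp only [hr, hδ, Matrix.mulVec, dotProduct, mul_sub,
      Finset.sum_sub_distrib]
    ring
  have hcross : ∑ i, w i * r i * X.mulVec δ i = 0 := by
    have h0 : ∀ j, ∑ i, X i j * (w i * r i) = 0 := by
      intro j
      have := congrFun hβs j
      simpa [hr, Matrix.mulVec, dotProduct, Matrix.transpose] using this
    calc ∑ i, w i * r i * X.mulVec δ i
        = ∑ i, ∑ j, w i * r i * (X i j * δ j) := by
          simp [Matrix.mulVec, dotProduct, Finset.mul_sum]
      _ = ∑ j, (∑ i, X i j * (w i * r i)) * δ j := by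
          rw [Finset.sum_comm]
          refine Finset.sum_congr rfl fun j _ => ?_
          rw [Finset.sum_mul]
          refine Finset.sum_congr rfl fun i _ => ?_
          ring
      _ = 0 := by simp [h0]
  have key : ∑ i, w i * r i ^ 2 ≤ ∑ i, w i * (X.mulVec β₀ i - y i) ^ 2 := by
    have expand : ∑ i, w i * (X.mulVec β₀ i - y i) ^ 2
        = ∑ i, w i * r i ^ 2 + 2 * (∑ i, w i * r i * X.mulVec δ i)
          + ∑ i, w i * (X.mulVec δ i) ^ 2 := by
      rw [Finset.mul_sum, ← Finset.sum_add_distrib, ← Finset.sum_add_distrib]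
      refine Finset.sum_congr rfl fun i _ => ?_
      rw [hsplit i]; ring
    have hnn : 0 ≤ ∑ i, w i * (X.mulVec δ i) ^ 2 :=
      Finset.sum_nonneg fun i _ => mul_nonneg (hw i).1 (sq_nonneg _)
    rw [expand, hcross]
    linarith
  have hub : ∑ i, w i * (X.mulVec β₀ i - y i) ^ 2 ≤ M ^ 2 := by
    rw [hM2]
    refine Finset.sum_le_sum fun i _ => ?_
    nlinarith [(hw i).1, (hw i).2, sq_nonneg (X.mulVec β₀ i - y i)]
  have hlb : M ^ 2 * ∑ i ∈ Finset.univ.filter (fun i => M < |r i|), w i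
      ≤ ∑ i, w i * r i ^ 2 := by
    rw [Finset.mul_sum]
    refine le_trans (Finset.sum_le_sum fun i hi => ?_)
      (Finset.sum_le_sum_of_subset_of_nonneg (Finset.filter_subset _ _)
        fun i _ _ => mul_nonneg (hw i).1 (sq_nonneg _))
    have hiB : M < |r i| := (Finset.mem_filter.mp hi).2
    have : M ^ 2 ≤ r i ^ 2 := by
      have := abs_nonneg (r i)
      nlinarith [sq_abs (r i)]
    nlinarith [(hw i).1]
  have : M ^ 2 * ∑ i ∈ Finset.univ.filter (fun i => M < |r i|), w i ≤ M ^ 2 * 1 := by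
    rw [mul_one]; linarith
  exact le_of_mul_le_mul_left (by linarith [this]) (by positivity : (0:ℝ) < M ^ 2)
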